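/- For fixed s ∈ (0,1], the function f_s(k) = cosh(k·s)^(1/s) / cosh(k) is non-increasing on [0, ∞). -/

import Mathlib

open Real Set

lemma f_hasDerivAt (s : ℝ) (hs : 0 < s) (k : ℝ) :
    HasDerivAt (fun k : ℝ => (Real.cosh (k * s)) ^ (1/s) / Real.cosh k)
      ((Real.sinh (k * s) * s * (1/s) * Real.cosh (k * s) ^ (1/s - 1) * Real.cosh k
        - Real.cosh (k * s) ^ (1/s) * Real.sinh k) / Real.cosh k ^ 2) k := by
  have h1 : HasDerivAt (fun k : ℝ => Real.cosh (k * s)) (Real.sinh (k * s) * s) k := by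
    simpa [Function.comp_def] using (Real.hasDerivAt_cosh (k * s)).comp k ((hasDerivAt_id k).mul_const s)
  have h2 := h1.rpow_const (p := 1/s) (Or.inl ((Real.cosh_pos _).ne'))
  exact h2.div (Real.hasDerivAt_cosh k) ((Real.cosh_pos _).ne')

theorem f_antitone (s : ℝ) (hs : s ∈ Set.Ioc (0:ℝ) 1) :
    AntitoneOn (fun k : ℝ => (Real.cosh (k * s)) ^ (1/s) / Real.cosh k) (Set.Ici (0:ℝ)) := by
  obtain ⟨hs0, hs1⟩ := hs
  apply antitoneOn_of_deriv_nonpos (convex_Ici 0)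
  · exact fun k _ => ((f_hasDerivAt s hs0 k).continuousAt).continuousWithinAt
  · exact fun k _ => ((f_hasDerivAt s hs0 k).differentiableAt).differentiableWithinAt
  · intro k hk
    rw [interior_Ici] at hk
    rw [(f_hasDerivAt s hs0 k).deriv]
    apply div_nonpos_of_nonpos_of_nonneg _ (sq_nonneg _)
    have hc : (0:ℝ) < Real.cosh (k * s) := Real.cosh_pos _
    have key : Real.sinh (k * s) * s * (1/s) * Real.cosh (k * s) ^ (1/s - 1) * Real.cosh k
        - Real.cosh (k * s) ^ (1/s) * Real.sinh k
        = Real.cosh (k * s) ^ (1/s - 1) * Real.sinh (k * s - k) := by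
      rw [Real.sinh_sub]
      have h1 : Real.sinh (k*s) * s * (1/s) = Real.sinh (k*s) := by
        field_simp
      have h2 : Real.cosh (k*s) ^ (1/s) = Real.cosh (k*s) ^ (1/s - 1) * Real.cosh (k*s) := by
        rw [← Real.rpow_add_one hc.ne']; ring_nf
      rw [h1, h2]; ring
    rw [key]
    apply mul_nonpos_of_nonneg_of_nonpos (Real.rpow_nonneg hc.le _)
    apply Real.sinh_nonpos_iff.mpr
    nlinarith [(Set.mem_Ioi.mp hk).le]
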